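/- For every integer r ≥ 0, the set of points X with d_pc(O,X) = r lying on the line y = x + r and outside the first quadrant is exactly {(x, x+r) : x ∈ ℤ, x < 0, x + r ≥ 0} ∖ {(0,r)}, i.e., {(x,x+r) : -r ≤ x ≤ -1}. -/

import Mathlib

def Lp : ℤ × ℤ → ℤ × ℤ := fun p => (-p.1 + 2*p.2 + 1, p.2)
def Lpp : ℤ × ℤ → ℤ × ℤ := fun p => (p.1, 2*p.1 - p.2 + 1)
def Mr : ℤ × ℤ → ℤ × ℤ := fun p => (p.1 + 1, p.2)
def Ml : ℤ × ℤ → ℤ × ℤ := fun p => (p.1 - 1, p.2)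
def Mu : ℤ × ℤ → ℤ × ℤ := fun p => (p.1, p.2 + 1)
def Md : ℤ × ℤ → ℤ × ℤ := fun p => (p.1, p.2 - 1)

def ops : Set ((ℤ × ℤ) → (ℤ × ℤ)) := {Lp, Lpp, Mr, Ml, Mu, Md}

/-- The parabolic-taxicab distance: minimal number of operators from `ops`
needed to map `P` to `Q`. -/
noncomputable def dpc (P Q : ℤ × ℤ) : ℕ :=
  sInf {n | ∃ l : List ((ℤ × ℤ) → (ℤ × ℤ)), l.length = n ∧ (∀ f ∈ l, f ∈ ops) ∧
    l.foldr (fun f p => f p) P = Q}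

lemma key : ∀ (l : List ((ℤ × ℤ) → (ℤ × ℤ))), (∀ f ∈ l, f ∈ ops) →
    ∀ X : ℤ × ℤ, l.foldr (fun f p => f p) (0,0) = X →
    (X.2 - X.1).natAbs ≤ l.length ∧
    ((X.2 - X.1).natAbs = l.length → min (X.2 - X.1) 0 ≤ X.2) := by
  intro l
  induction l with
  | nil =>
    rintro _ X hX
    simp only [List.foldr_nil] at hX
    subst hX
    simp
  | cons f l ih =>
    intro h X hX
    have hl : ∀ g ∈ l, g ∈ ops := fun g hg => h g (List.mem_cons_of_mem f hg)
    obtain ⟨ih1, ih2⟩ := ih hl (l.foldr (fun f p => f p) (0,0)) rfl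
    have hf : f ∈ ops := h f (List.mem_cons_self (a := f) (l := l))
    set P := l.foldr (fun f p => f p) (0,0) with hP
    simp only [List.foldr_cons] at hX
    rw [← hP] at hX
    simp only [ops, Set.mem_insert_iff, Set.mem_singleton_iff] at hf
    simp only [List.length_cons]
    rcases hf with rfl | rfl | rfl | rfl | rfl | rfl <;>
      simp only [Lp, Lpp, Mr, Ml, Mu, Md] at hX <;> subst hX <;>
      constructor <;> simp only [] <;> omega

lemma foldr_rep (f : (ℤ × ℤ) → (ℤ × ℤ)) (k : ℕ) (P : ℤ × ℤ) :
    (List.replicate k f).foldr (fun g p => g p) P = f^[k] P := by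
  induction k with
  | zero => simp
  | succ n ihn => simp [List.replicate_succ, ihn, Function.iterate_succ_apply']

lemma iter_Mr (k : ℕ) (P : ℤ × ℤ) : Mr^[k] P = (P.1 + k, P.2) := by
  induction k with
  | zero => simp
  | succ n ihn => simp [Function.iterate_succ_apply', ihn, Mr]; ring

lemma iter_Ml (k : ℕ) (P : ℤ × ℤ) : Ml^[k] P = (P.1 - k, P.2) := by
  induction k with
  | zero => simp
  | succ n ihn => simp [Function.iterate_succ_apply', ihn, Ml]; ring

lemma iter_Mu (k : ℕ) (P : ℤ × ℤ) : Mu^[k] P = (P.1, P.2 + k) := by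
  induction k with
  | zero => simp
  | succ n ihn => simp [Function.iterate_succ_apply', ihn, Mu]; ring

lemma iter_Md (k : ℕ) (P : ℤ × ℤ) : Md^[k] P = (P.1, P.2 - k) := by
  induction k with
  | zero => simp
  | succ n ihn => simp [Function.iterate_succ_apply', ihn, Md]; ring

lemma path_to (x y : ℤ) (hx : x ≤ 0) (hy : 0 ≤ y) :
    ∃ l : List ((ℤ × ℤ) → (ℤ × ℤ)), l.length = y.toNat + (-x).toNat ∧
      (∀ f ∈ l, f ∈ ops) ∧ l.foldr (fun f p => f p) (0,0) = (x, y) := by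
  refine ⟨List.replicate y.toNat Mu ++ List.replicate (-x).toNat Ml, by simp, ?_, ?_⟩
  · intro f hf
    rw [List.mem_append] at hf
    rcases hf with hf | hf <;> rw [List.eq_of_mem_replicate hf] <;> simp [ops]
  · rw [List.foldr_append, foldr_rep, foldr_rep, iter_Ml, iter_Mu]
    simp only [Prod.mk.injEq]
    omega

lemma reach (X : ℤ × ℤ) :
    ∃ l : List ((ℤ × ℤ) → (ℤ × ℤ)), (∀ f ∈ l, f ∈ ops) ∧
      l.foldr (fun f p => f p) (0,0) = X := by
  obtain ⟨x, y⟩ := X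
  refine ⟨(if 0 ≤ y then List.replicate y.toNat Mu else List.replicate (-y).toNat Md) ++
      (if 0 ≤ x then List.replicate x.toNat Mr else List.replicate (-x).toNat Ml), ?_, ?_⟩
  · intro f hf
    rw [List.mem_append] at hf
    rcases hf with hf | hf <;> split_ifs at hf <;>
      rw [List.eq_of_mem_replicate hf] <;> simp [ops]
  · rw [List.foldr_append]
    split_ifs with h1 h2 h2 <;>
      rw [foldr_rep, foldr_rep] <;>
      simp only [iter_Mr, iter_Ml, iter_Mu, iter_Md, Prod.mk.injEq] <;> omega

lemma dpc_ge (X : ℤ × ℤ) : (X.2 - X.1).natAbs ≤ dpc (0, 0) X := by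
  apply le_csInf
  · obtain ⟨l, h1, h2⟩ := reach X
    exact ⟨l.length, l, rfl, h1, h2⟩
  · rintro n ⟨l, rfl, hmem, hfold⟩
    exact (key l hmem X hfold).1

theorem boundary_on_top_line_outside_first_quadrant (r : ℕ) :
    {X : ℤ × ℤ | dpc (0, 0) X = r ∧ X.2 = X.1 + (r : ℤ) ∧ ¬(0 ≤ X.1 ∧ 0 ≤ X.2)} =
      {X : ℤ × ℤ | ∃ x : ℤ, -(r : ℤ) ≤ x ∧ x ≤ -1 ∧ X = (x, x + (r : ℤ))} := by
  ext ⟨x, y⟩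
  simp only [Set.mem_setOf_eq]
  constructor
  · rintro ⟨hd, hline, hq⟩
    -- the set of lengths is nonempty, so the infimum is attained
    have hne : {n | ∃ l : List ((ℤ × ℤ) → (ℤ × ℤ)), l.length = n ∧ (∀ f ∈ l, f ∈ ops) ∧
        l.foldr (fun f p => f p) (0,0) = (x, y)}.Nonempty := by
      obtain ⟨l, h1, h2⟩ := reach (x, y)
      exact ⟨l.length, l, rfl, h1, h2⟩
    obtain ⟨l, hlen, hmem, hfold⟩ := Nat.sInf_mem hne
    have hd' : sInf {n | ∃ l : List ((ℤ × ℤ) → (ℤ × ℤ)), l.length = n ∧ (∀ f ∈ l, f ∈ ops) ∧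
        l.foldr (fun f p => f p) (0,0) = (x, y)} = r := hd
    rw [hd'] at hlen
    obtain ⟨k1, k2⟩ := key l hmem (x, y) hfold
    have k1' : (y - x).natAbs ≤ l.length := k1
    have e : (y - x).natAbs = l.length := by clear * - hline hlen k1'; omega
    have k2' : min (y - x) 0 ≤ y := k2 e
    have hy : (0 : ℤ) ≤ y := by clear * - hline k2'; omega
    refine ⟨x, ?_, ?_, by simp [hline]⟩ <;> clear * - hline hy hq <;> omega
  · rintro ⟨z, h1, h2, heq⟩
    rw [Prod.mk.injEq] at heq
    obtain ⟨rfl, rfl⟩ := heq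
    refine ⟨?_, rfl, by clear * - h1 h2; omega⟩
    apply le_antisymm
    · obtain ⟨l, hl1, hl2, hl3⟩ := path_to x (x + r) (by clear * - h1 h2; omega)
        (by clear * - h1 h2; omega)
      exact Nat.sInf_le ⟨l, by clear * - h1 h2 hl1; omega, hl2, hl3⟩
    · have hge : ((x + (r : ℤ)) - x).natAbs ≤ dpc (0, 0) (x, x + (r : ℤ)) :=
        dpc_ge (x, x + (r : ℤ))
      clear * - hge
      omega
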